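/- arXiv:1606.05998 — 2 statements merged into one kernel-verified Lean document; each statement's English description precedes it below -/
import Mathlib

section
/- For n ≥ 1 and κ ∈ (0,8), let α⁺_{2n} = n(4n+8-κ)/κ, α⁺_{2n+1} = (n+1)(4(n+1)+4-κ)/κ, and define u₁(λ) = (4-κ/2)/κ + (1/κ)√(4κλ + (4-κ/2)²). Then α⁺_{2n+1} = u₁(α⁺_{2n}) + α⁺_{2n}. -/
/-- Boundary arm exponent recursion: `α⁺_{2n+1} = u₁(α⁺_{2n}) + α⁺_{2n}` for `κ ∈ (0,8)`. -/
theorem stmt_1 (κ : ℝ) (hκ0 : 0 < κ) (hκ8 : κ < 8) (n : ℕ) (hn : 1 ≤ n)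
    (α₂ α₃ : ℝ) (hα₂ : α₂ = n * (4 * n + 8 - κ) / κ)
    (hα₃ : α₃ = (n + 1) * (4 * (n + 1) + 4 - κ) / κ)
    (u₁ : ℝ → ℝ)
    (hu₁ : ∀ lam : ℝ, u₁ lam = (4 - κ / 2) / κ + (1 / κ) * Real.sqrt (4 * κ * lam + (4 - κ / 2) ^ 2)) :
    α₃ = u₁ α₂ + α₂ := by
  have hκ := hκ0.ne'
  have hn1 : (1 : ℝ) ≤ (n : ℝ) := by exact_mod_cast hn
  have hsq : 4 * κ * α₂ + (4 - κ / 2) ^ 2 = (4 * n + 4 - κ / 2) ^ 2 := by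
    rw [hα₂]; field_simp; ring
  have hpos : (0 : ℝ) ≤ 4 * n + 4 - κ / 2 := by nlinarith
  rw [hα₃, hu₁, hsq, Real.sqrt_sq hpos, hα₂]
  field_simp
  ring
end

section
/- For κ > 0 and real numbers λ, b with 4b ≥ (λ-b)(κλ - κb + 4 - κ), condition (4b ≥ (λ-b)(κ(λ-b)+4-κ)) implies the condition κλ - κu₁(λ) + 8 - 2κ < κb ≤ κλ + κu₁(λ), where u₁(λ) = ((4-κ/2)+√(4κλ+(4-κ/2)²))/κ and λ ≥ 0. Moreover under the same hypothesis β := u₁(λ) + λ - b ≥ 0. -/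
/-- The condition `4b ≥ (λ-b)(κλ - κb + 4 - κ)` implies
`κλ - κu₁(λ) + 8 - 2κ < κb ≤ κλ + κu₁(λ)` and `β := u₁(λ) + λ - b ≥ 0`, where
`u₁(λ) = ((4-κ/2)+√(4κλ+(4-κ/2)²))/κ` and `λ ≥ 0`. -/
theorem stmt_17 (κ lam b : ℝ) (hκ : 0 < κ) (hlam : 0 ≤ lam)
    (h : (lam - b) * (κ * lam - κ * b + 4 - κ) ≤ 4 * b)
    (u₁ : ℝ)
    (hu₁ : u₁ = ((4 - κ / 2) + Real.sqrt (4 * κ * lam + (4 - κ / 2) ^ 2)) / κ) :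
    (κ * lam - κ * u₁ + 8 - 2 * κ < κ * b ∧ κ * b ≤ κ * lam + κ * u₁) ∧
      0 ≤ u₁ + lam - b := by
  set s : ℝ := Real.sqrt (4 * κ * lam + (4 - κ / 2) ^ 2) with hs
  have hs0 : 0 ≤ s := Real.sqrt_nonneg _
  have harg : 0 ≤ 4 * κ * lam + (4 - κ / 2) ^ 2 := by positivity
  have hs2 : s ^ 2 = 4 * κ * lam + (4 - κ / 2) ^ 2 := Real.sq_sqrt harg
  have hq : κ * (lam - b) ^ 2 + (8 - κ) * (lam - b) - 4 * lam ≤ 0 := by nlinarith [h]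
  have hsq : (2 * κ * (lam - b) + 8 - κ) ^ 2 ≤ (2 * s) ^ 2 := by nlinarith [hq, hs2, hκ.le]
  have hA : 2 * κ * (lam - b) + 8 - κ ≤ 2 * s := by nlinarith [hsq, hs0]
  have hB : -(2 * s) ≤ 2 * κ * (lam - b) + 8 - κ := by nlinarith [hsq, hs0]
  have hκu : κ * u₁ = (4 - κ / 2) + s := by
    rw [hu₁]; field_simp
  refine ⟨⟨by nlinarith [hA, hκu], by nlinarith [hB, hκu]⟩, ?_⟩
  have : 0 ≤ κ * (u₁ + lam - b) := by nlinarith [hB, hκu]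
  nlinarith [this, hκ]
end
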